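/- Let n be even. The number of reduced unipotent symmetric Latin squares of order n equals the number of idempotent symmetric Latin squares of order n−1, which in turn equals the number of reduced symmetric Latin squares of order n−1. -/

import Mathlib

/-- A Latin square of order `n`: each row and each column is a bijection. -/
def IsLatin {n : ℕ} (L : Fin n → Fin n → Fin n) : Prop :=
  (∀ i, Function.Bijective (L i)) ∧ (∀ j, Function.Bijective fun i => L i j)

/-- `L` is symmetric: `L(i,j) = L(j,i)`. -/
def IsSymmetric {n : ℕ} (L : Fin n → Fin n → Fin n) : Prop :=
  ∀ i j, L i j = L j i

/-- `L` is semisymmetric: `L(i,j) = k → L(j,k) = i`. -/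
def IsSemisymmetric {n : ℕ} (L : Fin n → Fin n → Fin n) : Prop :=
  ∀ i j, L j (L i j) = i

/-- Totally symmetric: symmetric and semisymmetric. -/
def IsTotallySymmetric {n : ℕ} (L : Fin n → Fin n → Fin n) : Prop :=
  IsSymmetric L ∧ IsSemisymmetric L

/-- Reduced: the first row and first column are in natural order. -/
def IsReducedLS {n : ℕ} (L : Fin n → Fin n → Fin n) : Prop :=
  ∀ i j : Fin n, ((i : ℕ) = 0 → L i j = j) ∧ ((j : ℕ) = 0 → L i j = i)

/-- Idempotent: `L(i,i) = i` for all `i`. -/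
def IsIdempotent {n : ℕ} (L : Fin n → Fin n → Fin n) : Prop :=
  ∀ i, L i i = i

/-- Unipotent: all diagonal entries are equal. -/
def IsUnipotent {n : ℕ} (L : Fin n → Fin n → Fin n) : Prop :=
  ∀ i j, L i i = L j j

/-- `B` is isotopic to `A`: `B = A(α,β,γ)`. -/
def Isotopic {n : ℕ} (A B : Fin n → Fin n → Fin n) : Prop :=
  ∃ α β γ : Equiv.Perm (Fin n), ∀ i j, B (α i) (β j) = γ (A i j)

/-- `B` is rrs-isotopic to `A`: `B = A(α,α,γ)`. -/
def RrsIsotopic {n : ℕ} (A B : Fin n → Fin n → Fin n) : Prop :=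
  ∃ α γ : Equiv.Perm (Fin n), ∀ i j, B (α i) (α j) = γ (A i j)

/-- `B` is isomorphic to `A`: `B = A(α,α,α)`. -/
def Isomorphic {n : ℕ} (A B : Fin n → Fin n → Fin n) : Prop :=
  ∃ α : Equiv.Perm (Fin n), ∀ i j, B (α i) (α j) = α (A i j)

/-- `B` is one of the six conjugates of `A`, obtained by uniformly permuting
the coordinates of the triples `(i, j, A i j)`. -/
def IsConjugate {n : ℕ} (A B : Fin n → Fin n → Fin n) : Prop :=
  (∀ i j, B i j = A i j) ∨ (∀ i j, B j i = A i j) ∨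
  (∀ i j, B (A i j) j = i) ∨ (∀ i j, B i (A i j) = j) ∨
  (∀ i j, B j (A i j) = i) ∨ (∀ i j, B (A i j) i = j)

/-- `B` is paratopic to `A`: `B` is isotopic to some conjugate of `A`. -/
def Paratopic {n : ℕ} (A B : Fin n → Fin n → Fin n) : Prop :=
  ∃ C : Fin n → Fin n → Fin n, IsConjugate A C ∧ Isotopic C B

def extLS {m : ℕ} (L : Fin m → Fin m → Fin m) : Fin (m+1) → Fin (m+1) → Fin (m+1) :=
  fun i j => Fin.cases j (fun i' => Fin.cases i'.succ (fun j' => if i' = j' then 0 else (L i' j').succ) j) i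

def resLS {m : ℕ} (B : Fin (m+1) → Fin (m+1) → Fin (m+1)) : Fin m → Fin m → Fin m :=
  fun i j => if i = j then i else
    ⟨(B i.succ j.succ : ℕ) - 1, by have := (B i.succ j.succ).isLt; have := i.isLt; omega⟩

@[simp] lemma extLS_zero_left {m : ℕ} (L : Fin m → Fin m → Fin m) (j : Fin (m+1)) :
    extLS L 0 j = j := by simp [extLS]

@[simp] lemma extLS_succ_zero {m : ℕ} (L : Fin m → Fin m → Fin m) (i : Fin m) :
    extLS L i.succ 0 = i.succ := by simp [extLS]

@[simp] lemma extLS_succ_succ {m : ℕ} (L : Fin m → Fin m → Fin m) (i j : Fin m) :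
    extLS L i.succ j.succ = if i = j then 0 else (L i j).succ := by simp [extLS]

lemma extLS_symm {m : ℕ} {L : Fin m → Fin m → Fin m} (hS : IsSymmetric L) :
    IsSymmetric (extLS L) := by
  intro i j
  induction i using Fin.cases with
  | zero =>
    induction j using Fin.cases with
    | zero => rfl
    | succ j' => simp
  | succ i' =>
    induction j using Fin.cases with
    | zero => simp
    | succ j' =>
      rcases eq_or_ne i' j' with h | h
      · subst h; rfl
      · simp [h, h.symm, hS i' j']

lemma extLS_diag {m : ℕ} (L : Fin m → Fin m → Fin m) (i : Fin (m+1)) :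
    extLS L i i = 0 := by
  induction i using Fin.cases with
  | zero => simp
  | succ i' => simp

lemma extLS_latin {m : ℕ} {L : Fin m → Fin m → Fin m} (hL : IsLatin L)
    (hS : IsSymmetric L) (hI : IsIdempotent L) : IsLatin (extLS L) := by
  have rowinj : ∀ i : Fin (m+1), Function.Injective (extLS L i) := by
    intro i
    induction i using Fin.cases with
    | zero => intro a b hab; simpa using hab
    | succ i' =>
      intro a b hab
      induction a using Fin.cases with
      | zero =>
        induction b using Fin.cases with
        | zero => rfl
        | succ b' =>
          exfalso
          simp only [extLS_succ_zero, extLS_succ_succ] at hab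
          rcases eq_or_ne i' b' with h | h
          · rw [if_pos h] at hab; exact Fin.succ_ne_zero i' hab
          · rw [if_neg h] at hab
            have h1 : i' = L i' b' := Fin.succ_injective _ hab
            have h2 : L i' b' = L i' i' := by rw [hI i', ← h1]
            exact h (((hL.1 i').1 h2).symm)
      | succ a' =>
        induction b using Fin.cases with
        | zero =>
          exfalso
          simp only [extLS_succ_zero, extLS_succ_succ] at hab
          rcases eq_or_ne i' a' with h | h
          · rw [if_pos h] at hab; exact Fin.succ_ne_zero i' hab.symm
          · rw [if_neg h] at hab
            have h1 : L i' a' = i' := Fin.succ_injective _ hab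
            have h2 : L i' a' = L i' i' := by rw [hI i', h1]
            exact h (((hL.1 i').1 h2).symm)
        | succ b' =>
          simp only [extLS_succ_succ] at hab
          rcases eq_or_ne i' a' with ha | ha <;> rcases eq_or_ne i' b' with hb | hb
          · rw [← ha, ← hb]
          · rw [if_pos ha, if_neg hb] at hab
            exact absurd hab.symm (Fin.succ_ne_zero _)
          · rw [if_neg ha, if_pos hb] at hab
            exact absurd hab (Fin.succ_ne_zero _)
          · rw [if_neg ha, if_neg hb] at hab
            have := Fin.succ_injective _ hab
            rw [(hL.1 i').1 this]
  have hsym := extLS_symm hS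
  constructor
  · intro i; exact (Finite.injective_iff_bijective).1 (rowinj i)
  · intro j
    have : (fun i => extLS L i j) = extLS L j := by
      funext x; exact hsym x j
    rw [this]
    exact (Finite.injective_iff_bijective).1 (rowinj j)

lemma extLS_props {m : ℕ} {L : Fin m → Fin m → Fin m}
    (h : IsLatin L ∧ IsSymmetric L ∧ IsIdempotent L) :
    IsLatin (extLS L) ∧ IsSymmetric (extLS L) ∧ IsUnipotent (extLS L) ∧
      IsReducedLS (extLS L) := by
  obtain ⟨hL, hS, hI⟩ := h
  refine ⟨extLS_latin hL hS hI, extLS_symm hS, ?_, ?_⟩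
  · intro i j; rw [extLS_diag, extLS_diag]
  · intro i j
    constructor
    · intro hi
      have : i = 0 := Fin.ext (by simpa using hi)
      subst this; simp
    · intro hj
      have : j = 0 := Fin.ext (by simpa using hj)
      subst this
      induction i using Fin.cases with
      | zero => simp
      | succ i' => simp

section Res
variable {m : ℕ} {B : Fin (m+1) → Fin (m+1) → Fin (m+1)}

lemma res_row0 (hR : IsReducedLS B) : ∀ j, B 0 j = j := fun j => (hR 0 j).1 rfl
lemma res_col0 (hR : IsReducedLS B) : ∀ i, B i 0 = i := fun i => (hR i 0).2 rfl

lemma res_diag (hU : IsUnipotent B) (hR : IsReducedLS B) : ∀ i, B i i = 0 := by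
  intro i; rw [hU i 0, res_col0 hR 0]

lemma res_ne_zero (hL : IsLatin B) (hU : IsUnipotent B) (hR : IsReducedLS B)
    {i j : Fin m} (h : i ≠ j) : B i.succ j.succ ≠ 0 := by
  intro hc
  rw [← res_diag hU hR i.succ] at hc
  exact h (Fin.succ_injective _ ((hL.1 i.succ).1 hc)).symm

lemma succ_resLS (hL : IsLatin B) (hU : IsUnipotent B) (hR : IsReducedLS B)
    {i j : Fin m} (h : i ≠ j) : (resLS B i j).succ = B i.succ j.succ := by
  have hne := res_ne_zero hL hU hR h
  have hv : (B i.succ j.succ : ℕ) ≠ 0 := by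
    intro hc; exact hne (Fin.ext (by simpa using hc))
  apply Fin.ext
  simp only [resLS, if_neg h, Fin.val_succ]
  omega

lemma resLS_symm (hS : IsSymmetric B) : IsSymmetric (resLS B) := by
  intro i j
  rcases eq_or_ne i j with h | h
  · subst h; rfl
  · apply Fin.ext
    simp only [resLS, if_neg h, if_neg h.symm]
    rw [hS]

lemma resLS_idem : IsIdempotent (resLS B) := by
  intro i; simp [resLS]

lemma resLS_latin (hL : IsLatin B) (hS : IsSymmetric B) (hU : IsUnipotent B)
    (hR : IsReducedLS B) : IsLatin (resLS B) := by
  have rowinj : ∀ i : Fin m, Function.Injective (resLS B i) := by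
    intro i a b hab
    rcases eq_or_ne i a with ha | ha <;> rcases eq_or_ne i b with hb | hb
    · rw [← ha, ← hb]
    · exfalso
      have h1 : (resLS B i a).succ = (resLS B i b).succ := by rw [hab]
      rw [succ_resLS hL hU hR hb] at h1
      have h2 : resLS B i a = i := by rw [← ha]; simp [resLS]
      rw [h2] at h1
      have h3 : B i.succ b.succ = B i.succ 0 := by rw [res_col0 hR i.succ]; exact h1.symm
      exact Fin.succ_ne_zero b ((hL.1 i.succ).1 h3)
    · exfalso
      have h1 : (resLS B i a).succ = (resLS B i b).succ := by rw [hab]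
      rw [succ_resLS hL hU hR ha] at h1
      have h2 : resLS B i b = i := by rw [← hb]; simp [resLS]
      rw [h2] at h1
      have h3 : B i.succ a.succ = B i.succ 0 := by rw [res_col0 hR i.succ]; exact h1
      exact Fin.succ_ne_zero a ((hL.1 i.succ).1 h3)
    · have h1 : (resLS B i a).succ = (resLS B i b).succ := by rw [hab]
      rw [succ_resLS hL hU hR ha, succ_resLS hL hU hR hb] at h1
      exact Fin.succ_injective _ ((hL.1 i.succ).1 h1)
  constructor
  · intro i; exact (Finite.injective_iff_bijective).1 (rowinj i)
  · intro j
    have : (fun i => resLS B i j) = resLS B j := by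
      funext x; exact resLS_symm hS x j
    rw [this]
    exact (Finite.injective_iff_bijective).1 (rowinj j)

lemma resLS_props (h : IsLatin B ∧ IsSymmetric B ∧ IsUnipotent B ∧ IsReducedLS B) :
    IsLatin (resLS B) ∧ IsSymmetric (resLS B) ∧ IsIdempotent (resLS B) :=
  ⟨resLS_latin h.1 h.2.1 h.2.2.1 h.2.2.2, resLS_symm h.2.1, resLS_idem⟩

lemma res_ext {L : Fin m → Fin m → Fin m} (hI : IsIdempotent L) :
    resLS (extLS L) = L := by
  funext i j
  rcases eq_or_ne i j with h | h
  · subst h; simp [resLS, hI i]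
  · apply Fin.ext
    simp [resLS, if_neg h, extLS_succ_succ, if_neg h]

lemma ext_res (hL : IsLatin B) (hU : IsUnipotent B) (hR : IsReducedLS B) :
    extLS (resLS B) = B := by
  funext i j
  induction i using Fin.cases with
  | zero => rw [extLS_zero_left, res_row0 hR]
  | succ i' =>
    induction j using Fin.cases with
    | zero => rw [extLS_succ_zero, res_col0 hR]
    | succ j' =>
      rw [extLS_succ_succ]
      rcases eq_or_ne i' j' with h | h
      · rw [if_pos h, h, res_diag hU hR]
      · rw [if_neg h, succ_resLS hL hU hR h]

end Res

lemma part1 (m : ℕ) :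
    Nat.card {L : Fin (m+1) → Fin (m+1) → Fin (m+1) //
        IsLatin L ∧ IsSymmetric L ∧ IsUnipotent L ∧ IsReducedLS L} =
      Nat.card {L : Fin m → Fin m → Fin m //
        IsLatin L ∧ IsSymmetric L ∧ IsIdempotent L} := by
  apply Nat.card_congr
  exact {
    toFun := fun p => ⟨resLS p.1, resLS_props p.2⟩
    invFun := fun q => ⟨extLS q.1, extLS_props q.2⟩
    left_inv := fun p => Subtype.ext (ext_res p.2.1 p.2.2.2.1 p.2.2.2.2)
    right_inv := fun q => Subtype.ext (res_ext q.2.2.2) }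

section Part2
variable {m : ℕ}

lemma diag_bij (hm : Odd m) {A : Fin m → Fin m → Fin m}
    (hL : IsLatin A) (hS : IsSymmetric A) : Function.Bijective (fun i => A i i) := by
  rw [← Finite.surjective_iff_bijective]
  intro k
  classical
  set S : Finset (Fin m × Fin m) := Finset.univ.filter (fun p => A p.1 p.2 = k) with hSdef
  have hcard : S.card = m := by
    have himg : S = Finset.univ.image
        (fun i : Fin m => (i, (Equiv.ofBijective (A i) (hL.1 i)).symm k)) := by
      ext p
      simp only [hSdef, Finset.mem_filter, Finset.mem_univ, true_and, Finset.mem_image,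
        Prod.ext_iff]
      constructor
      · intro hp
        refine ⟨p.1, rfl, ?_⟩
        rw [Equiv.symm_apply_eq, Equiv.ofBijective_apply, hp]
      · rintro ⟨i, rfl, h2⟩
        rw [Equiv.symm_apply_eq, Equiv.ofBijective_apply] at h2
        exact h2.symm
    rw [himg, Finset.card_image_of_injective _ (fun a b h => congrArg Prod.fst h),
      Finset.card_univ, Fintype.card_fin]
  have hltgt : (S.filter (fun p => p.1 < p.2)).card = (S.filter (fun p => p.2 < p.1)).card := by
    refine Finset.card_nbij' (fun p => (p.2, p.1)) (fun p => (p.2, p.1)) ?_ ?_ ?_ ?_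
    · intro p hp
      simp only [hSdef, Finset.mem_coe, Finset.mem_filter, Finset.mem_univ, true_and] at hp ⊢
      exact ⟨(hS p.2 p.1).trans hp.1, hp.2⟩
    · intro p hp
      simp only [hSdef, Finset.mem_coe, Finset.mem_filter, Finset.mem_univ, true_and] at hp ⊢
      exact ⟨(hS p.2 p.1).trans hp.1, hp.2⟩
    · intro p _; rfl
    · intro p _; rfl
  have e3 : ((S.filter fun p => ¬ p.1 = p.2).filter fun p => p.1 < p.2)
      = S.filter fun p => p.1 < p.2 := by
    rw [Finset.filter_filter]
    apply Finset.filter_congr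
    intro p _
    exact ⟨fun h => h.2, fun h => ⟨ne_of_lt h, h⟩⟩
  have e4 : ((S.filter fun p => ¬ p.1 = p.2).filter fun p => ¬ p.1 < p.2)
      = S.filter fun p => p.2 < p.1 := by
    rw [Finset.filter_filter]
    apply Finset.filter_congr
    intro p _
    constructor
    · intro h
      rcases lt_trichotomy p.1 p.2 with h1 | h1 | h1
      · exact absurd h1 h.2
      · exact absurd h1 h.1
      · exact h1
    · intro h; exact ⟨ne_of_gt h, not_lt.2 h.le⟩
  have e1 := Finset.card_filter_add_card_filter_not (s := S) (p := fun p => p.1 = p.2)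
  have e2 := Finset.card_filter_add_card_filter_not
    (s := S.filter (fun p => ¬ p.1 = p.2)) (p := fun p => p.1 < p.2)
  rw [e3, e4] at e2
  rw [hcard] at e1
  obtain ⟨t, ht⟩ := hm
  have hne : (S.filter (fun p => p.1 = p.2)).Nonempty := by
    rw [← Finset.card_pos]
    omega
  obtain ⟨p, hp⟩ := hne
  simp only [hSdef, Finset.mem_filter, Finset.mem_univ, true_and] at hp
  exact ⟨p.1, by show A p.1 p.1 = k; nth_rewrite 2 [hp.2]; exact hp.1⟩

/-- conjugate a square by a permutation -/
def conjBy (A : Fin m → Fin m → Fin m) (e : Equiv.Perm (Fin m)) :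
    Fin m → Fin m → Fin m := fun i j => A (e i) (e j)

lemma conjBy_latin {A : Fin m → Fin m → Fin m} (hL : IsLatin A) (e : Equiv.Perm (Fin m)) :
    IsLatin (conjBy A e) := by
  constructor
  · intro i
    exact (hL.1 (e i)).comp e.bijective
  · intro j
    have : (fun i => conjBy A e i j) = (fun x => A x (e j)) ∘ e := rfl
    rw [this]
    exact (hL.2 (e j)).comp e.bijective

lemma conjBy_symm {A : Fin m → Fin m → Fin m} (hS : IsSymmetric A) (e : Equiv.Perm (Fin m)) :
    IsSymmetric (conjBy A e) := fun i j => hS (e i) (e j)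

lemma conjBy_conjBy (A : Fin m → Fin m → Fin m) (e f : Equiv.Perm (Fin m)) :
    conjBy (conjBy A e) f = conjBy A (f.trans e) := rfl

lemma conjBy_eq_self (A : Fin m → Fin m → Fin m) (e : Equiv.Perm (Fin m))
    (h : ∀ x, e x = x) : conjBy A e = A := by
  funext i j; unfold conjBy; rw [h i, h j]

lemma part2 (m : ℕ) (hm : Odd m) :
    Nat.card {L : Fin m → Fin m → Fin m // IsLatin L ∧ IsSymmetric L ∧ IsIdempotent L} =
      Nat.card {L : Fin m → Fin m → Fin m // IsLatin L ∧ IsSymmetric L ∧ IsReducedLS L} := by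
  have hmpos : 0 < m := by rcases hm with ⟨t, ht⟩; omega
  haveI : NeZero m := ⟨hmpos.ne'⟩
  apply Nat.card_congr
  refine
    { toFun := fun p =>
        ⟨conjBy p.1 (Equiv.ofBijective (p.1 0) (p.2.1.1 0)).symm,
          conjBy_latin p.2.1 _, conjBy_symm p.2.2.1 _, ?_⟩
      invFun := fun q =>
        ⟨conjBy q.1 (Equiv.ofBijective (fun i => q.1 i i) (diag_bij hm q.2.1 q.2.2.1)).symm,
          conjBy_latin q.2.1 _, conjBy_symm q.2.2.1 _, ?_⟩
      left_inv := ?_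
      right_inv := ?_ }
  · -- reducedness of the image
    obtain ⟨L, hL, hS, hI⟩ := p
    set e := Equiv.ofBijective (L 0) (hL.1 0) with he
    have hσ0 : e.symm 0 = 0 := by
      rw [Equiv.symm_apply_eq]
      show (0 : Fin m) = L 0 0
      rw [hI 0]
    intro i j
    constructor
    · intro hi
      have : i = 0 := Fin.ext (by simpa using hi)
      subst this
      show L (e.symm 0) (e.symm j) = j
      rw [hσ0]
      exact Equiv.ofBijective_apply_symm_apply (L 0) (hL.1 0) j
    · intro hj
      have : j = 0 := Fin.ext (by simpa using hj)
      subst this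
      show L (e.symm i) (e.symm 0) = i
      rw [hσ0, hS]
      exact Equiv.ofBijective_apply_symm_apply (L 0) (hL.1 0) i
  · -- idempotence of the preimage
    obtain ⟨A, hL, hS, hR⟩ := q
    intro i
    exact Equiv.ofBijective_apply_symm_apply (fun x => A x x) (diag_bij hm hL hS) i
  · -- left inverse
    rintro ⟨L, hL, hS, hI⟩
    apply Subtype.ext
    simp only
    rw [conjBy_conjBy]
    apply conjBy_eq_self
    intro x
    set σ := (Equiv.ofBijective (L 0) (hL.1 0)).symm with hσ
    set FL := conjBy L σ with hFL
    set hb := diag_bij hm (conjBy_latin hL σ) (conjBy_symm hS σ) with hhb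
    set d := Equiv.ofBijective (fun i => FL i i) hb with hd
    show σ (d.symm x) = x
    have h1 : FL (d.symm x) (d.symm x) = x :=
      Equiv.ofBijective_apply_symm_apply (fun i => FL i i) hb x
    have h2 : FL (d.symm x) (d.symm x) = σ (d.symm x) := hI (σ (d.symm x))
    exact h2.symm.trans h1
  · -- right inverse
    rintro ⟨A, hL, hS, hR⟩
    apply Subtype.ext
    simp only
    rw [conjBy_conjBy]
    apply conjBy_eq_self
    intro x
    set hb := diag_bij hm hL hS with hhb
    set d := Equiv.ofBijective (fun i => A i i) hb with hd
    set GA := conjBy A d.symm with hGA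
    have hd0 : d.symm 0 = 0 := by
      rw [Equiv.symm_apply_eq]
      show (0 : Fin m) = A 0 0
      exact ((hR 0 0).1 rfl).symm
    have he : ∀ j, GA 0 j = d.symm j := by
      intro j
      show A (d.symm 0) (d.symm j) = d.symm j
      rw [hd0]
      exact (hR 0 (d.symm j)).1 rfl
    set hrow := (conjBy_latin hL d.symm).1 0 with hhrow
    show d.symm ((Equiv.ofBijective (GA 0) hrow).symm x) = x
    have h1 : GA 0 ((Equiv.ofBijective (GA 0) hrow).symm x) = x :=
      Equiv.ofBijective_apply_symm_apply (GA 0) hrow x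
    exact (he _).symm.trans h1
end Part2

theorem stmt9 {n : ℕ} (hn : Even n) :
    Nat.card {L : Fin n → Fin n → Fin n //
        IsLatin L ∧ IsSymmetric L ∧ IsUnipotent L ∧ IsReducedLS L} =
      Nat.card {L : Fin (n-1) → Fin (n-1) → Fin (n-1) //
        IsLatin L ∧ IsSymmetric L ∧ IsIdempotent L} ∧
    Nat.card {L : Fin (n-1) → Fin (n-1) → Fin (n-1) //
        IsLatin L ∧ IsSymmetric L ∧ IsIdempotent L} =
      Nat.card {L : Fin (n-1) → Fin (n-1) → Fin (n-1) //
        IsLatin L ∧ IsSymmetric L ∧ IsReducedLS L} := by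
  rcases Nat.eq_zero_or_pos n with h0 | hpos
  · subst h0
    have key : ∀ (P : (Fin 0 → Fin 0 → Fin 0) → Prop),
        P (fun i _ => i) → Nat.card {L : Fin 0 → Fin 0 → Fin 0 // P L} = 1 := by
      intro P hP
      haveI : Nonempty {L : Fin 0 → Fin 0 → Fin 0 // P L} := ⟨⟨_, hP⟩⟩
      haveI : Subsingleton (Fin 0 → Fin 0 → Fin 0) :=
        ⟨fun f g => funext fun x => x.elim0⟩
      exact Nat.card_unique
    have triv : ∀ Q : Prop, (∀ i : Fin 0, Q) := fun Q i => i.elim0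
    constructor
    · show Nat.card {L : Fin 0 → Fin 0 → Fin 0 // _} = Nat.card {L : Fin 0 → Fin 0 → Fin 0 // _}
      rw [key _ ⟨⟨fun i => i.elim0, fun i => i.elim0⟩, fun i => i.elim0, fun i => i.elim0,
          fun i => i.elim0⟩,
        key _ ⟨⟨fun i => i.elim0, fun i => i.elim0⟩, fun i => i.elim0, fun i => i.elim0⟩]
    · show Nat.card {L : Fin 0 → Fin 0 → Fin 0 // _} = Nat.card {L : Fin 0 → Fin 0 → Fin 0 // _}
      rw [key _ ⟨⟨fun i => i.elim0, fun i => i.elim0⟩, fun i => i.elim0, fun i => i.elim0⟩,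
        key _ ⟨⟨fun i => i.elim0, fun i => i.elim0⟩, fun i => i.elim0, fun i => i.elim0⟩]
  · obtain ⟨m, rfl⟩ : ∃ m, n = m + 1 := ⟨n - 1, by omega⟩
    have hm : Odd m := by
      obtain ⟨k, hk⟩ := hn
      exact ⟨k - 1, by omega⟩
    exact ⟨part1 m, part2 m hm⟩
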